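/- Let n ≥ 3 and let m be a positive integer with n-decomposition m = F_{n,c_1} + F_{n,c_2} + ⋯ + F_{n,c_k} (so c_1 ≥ n and c_i ≥ c_{i-1} + n for i = 2, …, k). Then the concatenation S_{c_k} ∘ S_{c_{k-1}} ∘ ⋯ ∘ S_{c_1} equals the string formed by the first m letters of S_∞. -/

import Mathlib

/-- Let `n ≥ 3` and let `m ≥ 1` have `n`-decomposition
`m = F c₁ + ⋯ + F c_k`, encoded by the list `L = [c₁, …, c_k]` with
`cᵢ ≥ n`, consecutive gaps at least `n`, and `(L.map F).sum = m`.
Then `S c_k ∘ S c_{k-1} ∘ ⋯ ∘ S c₁` equals the first `m` letters of the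
infinite `n`-string `W = S_∞`. -/
theorem decomposition_gives_prefix (n : ℕ) (hn : 3 ≤ n) (F : ℕ → ℕ)
    (hF1 : ∀ i, 1 ≤ i → i ≤ n → F i = 1)
    (hFrec : ∀ m, n ≤ m → F (m + 1) = F m + F (m + 1 - n))
    (S : ℕ → List ℕ)
    (hS1 : ∀ i, 1 ≤ i → i ≤ n → S i = [i])
    (hSrec : ∀ m, n ≤ m → S (m + 1) = S m ++ S (m + 1 - n))
    (W : ℕ → ℕ)
    (hW : ∀ m, n ≤ m → S m = (List.range (S m).length).map W)
    (m : ℕ) (hm : 1 ≤ m) (L : List ℕ)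
    (hLn : ∀ c ∈ L, n ≤ c)
    (hLgap : L.Chain' (fun a b => a + n ≤ b))
    (hLsum : (L.map F).sum = m) :
    (L.reverse.map S).flatten = (List.range m).map W := by
  -- S is monotone under prefix
  have hSmono : ∀ a b, n ≤ a → a ≤ b → S a <+: S b := by
    intro a b ha hab
    induction b, hab using Nat.le_induction with
    | base => exact List.prefix_refl _
    | succ b hb ih =>
      refine ih.trans ?_
      rw [hSrec b (ha.trans hb)]
      exact List.prefix_append _ _
  -- lengths of S equal F
  have hlen : ∀ c, 1 ≤ c → (S c).length = F c := by
    intro c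
    induction c using Nat.strong_induction_on with
    | _ c ih =>
      intro hc
      rcases le_or_gt c n with h | h
      · rw [hS1 c hc h, hF1 c hc h]; rfl
      · obtain ⟨b, rfl⟩ : ∃ b, c = b + 1 := ⟨c - 1, by omega⟩
        have hb : n ≤ b := by omega
        rw [hSrec b hb, hFrec b hb, List.length_append,
          ih b (by omega) (by omega), ih (b + 1 - n) (by omega) (by omega)]
  -- flatten of a decreasing list is a prefix of S (head + 1)
  have hpre : ∀ (M : List ℕ) (a : ℕ), (∀ c ∈ M, n ≤ c) →
      M.Chain' (fun x y => y + n ≤ x) → M.head? = some a →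
      (M.map S).flatten <+: S (a + 1) := by
    intro M
    induction M with
    | nil => intro a _ _ h; simp at h
    | cons x M' ih =>
      intro a hmem hch hh
      simp only [List.head?_cons, Option.some.injEq] at hh
      subst hh
      have han : n ≤ x := hmem x (by simp)
      cases M' with
      | nil =>
        simp only [List.map_cons, List.map_nil, List.flatten_cons,
          List.flatten_nil, List.append_nil]
        rw [hSrec x han]
        exact List.prefix_append _ _
      | cons b M'' =>
        have hb : n ≤ b := hmem b (by simp)
        have hba : b + n ≤ x := (List.isChain_cons_cons.mp hch).1
        have ih' := ih b (fun c hc => hmem c (List.mem_cons_of_mem _ hc))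
          (List.isChain_cons_cons.mp hch).2 rfl
        have h2 : S (b + 1) <+: S (x + 1 - n) := hSmono _ _ (by omega) (by omega)
        have h3 : (((b :: M'').map S).flatten) <+: S (x + 1 - n) := ih'.trans h2
        rw [List.map_cons, List.flatten_cons, hSrec x han]
        obtain ⟨t, ht⟩ := h3
        exact ⟨t, by rw [List.append_assoc, ht]⟩
  -- L is nonempty
  cases hM : L.reverse with
  | nil =>
    have : L = [] := by simpa using congrArg List.reverse hM
    subst this; simp at hLsum; omega
  | cons a M' =>
    have hmem : ∀ c ∈ a :: M', n ≤ c := by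
      intro c hc
      exact hLn c (List.mem_reverse.mp (hM ▸ hc))
    have hch : (a :: M').Chain' (fun x y => y + n ≤ x) := by
      rw [← hM]
      exact List.isChain_reverse.mpr hLgap
    have han : n ≤ a := hmem a (by simp)
    have hT : ((a :: M').map S).flatten <+: S (a + 1) :=
      hpre _ a hmem hch rfl
    have hlenT : (((a :: M').map S).flatten).length = m := by
      rw [List.length_flatten, ← hLsum, ← List.sum_reverse (L.map F), ← List.map_reverse, hM]
      rw [List.map_map]
      congr 1
      exact List.map_congr_left fun c hc => hlen c (by have := hmem c hc; omega)
    have hmle : m ≤ (S (a + 1)).length := hlenT ▸ hT.length_le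
    have heq : ((a :: M').map S).flatten = (S (a + 1)).take m := by
      rw [← hlenT]
      exact List.prefix_iff_eq_take.mp hT
    rw [heq, hW (a + 1) (by omega), ← List.map_take, List.take_range,
      Nat.min_eq_left hmle]
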